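/- Let K be a field, ν : K* → G a demi-valuation with valuation ring A = R(ν). If every finitely generated ideal of A is principal, then ν satisfies the Bézout property: for all nonzero x, y ∈ A there exist c, d ∈ A with cx+dy ≠ 0 and ν(cx+dy) = inf(ν(x),ν(y)). -/

import Mathlib

/-- If every finitely generated ideal of the valuation ring of a demi-valuation ν is
principal, then ν satisfies the Bézout property. -/
theorem stmt_6 {K : Type*} [Field K] {G : Type*} [Lattice G] [AddCommGroup G]
    [CovariantClass G G (· + ·) (· ≤ ·)]
    (ν : K → G)
    (hmul : ∀ a b : K, a ≠ 0 → b ≠ 0 → ν (a * b) = ν a + ν b)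
    (hadd : ∀ a b : K, a ≠ 0 → b ≠ 0 → a + b ≠ 0 → ν a ⊓ ν b ≤ ν (a + b))
    (S : Subring K) (hS : ∀ x : K, x ∈ S ↔ (x = 0 ∨ (x ≠ 0 ∧ 0 ≤ ν x)))
    (hfg : ∀ J : Ideal S, J.FG → J.IsPrincipal) :
    ∀ x y : K, x ∈ S → y ∈ S → x ≠ 0 → y ≠ 0 →
      ∃ c d : K, c ∈ S ∧ d ∈ S ∧ c * x + d * y ≠ 0 ∧ ν (c * x + d * y) = ν x ⊓ ν y := by
  intro x y hx hy hx0 hy0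
  have hpos : ∀ s : K, s ∈ S → s ≠ 0 → 0 ≤ ν s := fun s hs h0 =>
    (((hS s).mp hs).resolve_left h0).2
  set X : S := ⟨x, hx⟩ with hX
  set Y : S := ⟨y, hy⟩ with hY
  obtain ⟨g, hg⟩ := (hfg (Ideal.span {X, Y}) (Submodule.fg_span ((Set.finite_singleton Y).insert X))).principal
  -- x and y are multiples of g
  have hXmem : X ∈ Ideal.span ({X, Y} : Set S) :=
    Ideal.subset_span (by simp)
  have hYmem : Y ∈ Ideal.span ({X, Y} : Set S) :=
    Ideal.subset_span (by simp)
  rw [hg] at hXmem hYmem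
  obtain ⟨a, ha⟩ := Ideal.mem_span_singleton.mp hXmem
  obtain ⟨b, hb⟩ := Ideal.mem_span_singleton.mp hYmem
  have hgmem : g ∈ Ideal.span ({X, Y} : Set S) := by
    rw [hg]; exact Ideal.mem_span_singleton_self g
  obtain ⟨c, d, hcd⟩ := Ideal.mem_span_pair.mp hgmem
  -- coerce to K
  have haK : x = (g : K) * (a : K) := congrArg (Subtype.val) ha
  have hbK : y = (g : K) * (b : K) := congrArg (Subtype.val) hb
  have hcdK : (c : K) * x + (d : K) * y = (g : K) := congrArg (Subtype.val) hcd
  have hg0 : (g : K) ≠ 0 := by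
    intro h; apply hx0; rw [haK, h, zero_mul]
  have ha0 : (a : K) ≠ 0 := by
    intro h; apply hx0; rw [haK, h, mul_zero]
  have hb0 : (b : K) ≠ 0 := by
    intro h; apply hy0; rw [hbK, h, mul_zero]
  -- ν g ≤ ν x and ν g ≤ ν y
  have hgx : ν (g : K) ≤ ν x := by
    rw [haK, hmul _ _ hg0 ha0]
    simpa using add_le_add_left (hpos _ (a.2) ha0) (ν (g : K))
  have hgy : ν (g : K) ≤ ν y := by
    rw [hbK, hmul _ _ hg0 hb0]
    simpa using add_le_add_left (hpos _ (b.2) hb0) (ν (g : K))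
  refine ⟨c, d, c.2, d.2, by rw [hcdK]; exact hg0, le_antisymm ?_ ?_⟩
  · rw [hcdK]; exact le_inf hgx hgy
  · -- ν x ⊓ ν y ≤ ν (c*x + d*y)
    rcases eq_or_ne (c : K) 0 with hc | hc
    · have : (d : K) ≠ 0 := by
        intro h; apply hg0; rw [← hcdK, hc, h, zero_mul, zero_mul, add_zero]
      have h1 : ν ((c : K) * x + (d : K) * y) = ν (d : K) + ν y := by
        rw [hc, zero_mul, zero_add, hmul _ _ this hy0]
      rw [h1]
      calc ν x ⊓ ν y ≤ ν y := inf_le_right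
        _ = 0 + ν y := (zero_add _).symm
        _ ≤ ν (d : K) + ν y := add_le_add_left (hpos _ d.2 this) _
    · rcases eq_or_ne (d : K) 0 with hd | hd
      · have h1 : ν ((c : K) * x + (d : K) * y) = ν (c : K) + ν x := by
          rw [hd, zero_mul, add_zero, hmul _ _ hc hx0]
        rw [h1]
        calc ν x ⊓ ν y ≤ ν x := inf_le_left
          _ = 0 + ν x := (zero_add _).symm
          _ ≤ ν (c : K) + ν x := add_le_add_left (hpos _ c.2 hc) _
      · have hcx : (c : K) * x ≠ 0 := mul_ne_zero hc hx0
        have hdy : (d : K) * y ≠ 0 := mul_ne_zero hd hy0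
        have hsum : (c : K) * x + (d : K) * y ≠ 0 := by rw [hcdK]; exact hg0
        refine le_trans ?_ (hadd _ _ hcx hdy hsum)
        refine inf_le_inf ?_ ?_
        · rw [hmul _ _ hc hx0]
          calc ν x = 0 + ν x := (zero_add _).symm
            _ ≤ ν (c : K) + ν x := add_le_add_left (hpos _ c.2 hc) _
        · rw [hmul _ _ hd hy0]
          calc ν y = 0 + ν y := (zero_add _).symm
            _ ≤ ν (d : K) + ν y := add_le_add_left (hpos _ d.2 hd) _
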